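/- Let (γ_t)_{t≥1} be a discount sequence with γ_t > 0 for all t and ∑_{t=1}^∞ γ_t < ∞, and let A : List Bool → ℝ be a weakly consistent pricing algorithm whose first price p₁ := A([]) lies in (0,1). Suppose there exists a strategy ã : ℕ → Bool whose price sequence p̃_t := p_t(ã) satisfies: there exist natural numbers t̃₀ ≤ t̃₁ with p̃_{t̃₁+1} < p̃_{t̃₀} < p₁. Then there exist a valuation v ∈ [0,1], a constant c > 0, and T₀ ∈ ℕ such that for every T ≥ T₀ and every strategy a that is optimal for (T, A, v, γ), one has Reg(T, A, v, a) ≥ c·T. -/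

import Mathlib

/-- The price offered at round `t` (rounds indexed from 1) by the
horizon-independent pricing algorithm `A : List Bool → ℝ` against the buyer
strategy `a : ℕ → Bool`: it is `A` applied to the history `[a 1, …, a (t-1)]`. -/
noncomputable def price (A : List Bool → ℝ) (a : ℕ → Bool) (t : ℕ) : ℝ :=
  A (List.ofFn (fun i : Fin (t - 1) => a (i + 1)))

/-- The buyer's `γ`-discounted surplus over horizon `T`. -/
noncomputable def Sur (γ : ℕ → ℝ) (T : ℕ) (A : List Bool → ℝ) (v : ℝ)
    (a : ℕ → Bool) : ℝ :=
  ∑ t ∈ Finset.Icc 1 T, γ t * (if a t then v - price A a t else 0)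

/-- The seller's regret over horizon `T`. -/
noncomputable def Reg (T : ℕ) (A : List Bool → ℝ) (v : ℝ) (a : ℕ → Bool) : ℝ :=
  ∑ t ∈ Finset.Icc 1 T, (v - (if a t then price A a t else 0))

/-- Weak consistency: after a price change following an acceptance all future
prices are at least the current one, and after a price change following a
rejection all future prices are at most the current one. -/
def WeaklyConsistent (A : List Bool → ℝ) : Prop :=
  ∀ s u : List Bool,
    (A (s ++ [true]) ≠ A s → A (s ++ [true] ++ u) ≥ A s) ∧
    (A (s ++ [false]) ≠ A s → A (s ++ [false] ++ u) ≤ A s)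

namespace Stmt15Aux

/-- The history of length `n` produced by strategy `a`. -/
def H (a : ℕ → Bool) (n : ℕ) : List Bool := List.ofFn (fun i : Fin n => a (i + 1))

lemma price_eq_H (A : List Bool → ℝ) (a : ℕ → Bool) (t : ℕ) :
    price A a t = A (H a (t - 1)) := rfl

lemma H_succ (a : ℕ → Bool) (n : ℕ) : H a (n + 1) = H a n ++ [a (n + 1)] := by
  rw [H, List.ofFn_succ']
  simp [H, List.concat_eq_append]

lemma exists_suffix (a : ℕ → Bool) (m : ℕ) : ∀ n, m ≤ n → ∃ u, H a n = H a m ++ u := by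
  intro n hn
  induction n, hn using Nat.le_induction with
  | base => exact ⟨[], by simp⟩
  | succ n hmn ih =>
    obtain ⟨u, hu⟩ := ih
    exact ⟨u ++ [a (n + 1)], by rw [H_succ, hu, List.append_assoc]⟩

lemma eq_on_prefix (a b : ℕ → Bool) (L n : ℕ) (hn : n ≤ L)
    (hab : ∀ t, 1 ≤ t → t ≤ L → a t = b t) : H a n = H b n := by
  unfold H
  congr 1
  funext i
  have := i.isLt
  exact hab _ (by omega) (by omega)

/-- Dichotomy: along any path, prices all stay at least the first price, or all
stay at most the first price. -/
lemma dicho {A : List Bool → ℝ} (hWC : WeaklyConsistent A) (a : ℕ → Bool) :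
    (∀ n, A [] ≤ A (H a n)) ∨ (∀ n, A (H a n) ≤ A []) := by
  by_cases hS : ∃ n, A (H a n) ≠ A []
  case neg =>
    push_neg at hS
    exact Or.inl fun n => (hS n).ge
  case pos =>
  have hspec := Nat.find_spec hS
  have hmin : ∀ m, m < Nat.find hS → A (H a m) = A [] := by
    intro m hm
    have := Nat.find_min hS hm
    exact not_not.mp this
  have h0 : Nat.find hS ≠ 0 := by
    intro h
    apply hspec
    rw [h]
    simp [H]
  obtain ⟨k, hk⟩ := Nat.exists_eq_succ_of_ne_zero h0
  have hsk : A (H a k) = A [] := hmin k (by omega)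
  have hstep : H a (Nat.find hS) = H a k ++ [a (k + 1)] := by rw [hk]; exact H_succ a k
  have hsuffix : ∀ n, Nat.find hS ≤ n → ∃ u, H a n = (H a k ++ [a (k + 1)]) ++ u := by
    intro n hn
    obtain ⟨u, hu⟩ := exists_suffix a (Nat.find hS) n hn
    exact ⟨u, by rw [hu, hstep]⟩
  have hne : A (H a k ++ [a (k + 1)]) ≠ A (H a k) := by
    rw [← hstep, hsk]; exact hspec
  cases hab : a (k + 1) with
  | true =>
    left
    intro n
    rcases Nat.lt_or_ge n (Nat.find hS) with h | h
    · exact (hmin n h).symm.le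
    · obtain ⟨u, hu⟩ := hsuffix n h
      rw [hab] at hu hne
      rw [hu, ← hsk]
      exact (hWC (H a k) u).1 hne
  | false =>
    right
    intro n
    rcases Nat.lt_or_ge n (Nat.find hS) with h | h
    · exact (hmin n h).le
    · obtain ⟨u, hu⟩ := hsuffix n h
      rw [hab] at hu hne
      rw [hu, ← hsk]
      exact (hWC (H a k) u).2 hne

/-- If the price strictly drops along a path between two moments, then there is
a history after which all prices stay at most the earlier price. -/
lemma cap {A : List Bool → ℝ} (hWC : WeaklyConsistent A) (a : ℕ → Bool) (m₀ k : ℕ)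
    (hmk : m₀ ≤ k) (hlt : A (H a k) < A (H a m₀)) :
    ∃ L, ∀ u, A (H a L ++ u) ≤ A (H a m₀) := by
  have hS : ∃ n, m₀ ≤ n ∧ A (H a n) ≠ A (H a m₀) := ⟨k, hmk, hlt.ne⟩
  obtain ⟨hm₀N, hneN⟩ := Nat.find_spec hS
  have hmin : ∀ m, m₀ ≤ m → m < Nat.find hS → A (H a m) = A (H a m₀) := by
    intro m h1 h2
    have := Nat.find_min hS h2
    push_neg at this
    exact this h1
  have hNe : Nat.find hS ≠ m₀ := by
    intro h
    apply hneN
    rw [h]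
  have hNpos : m₀ < Nat.find hS := lt_of_le_of_ne hm₀N (Ne.symm hNe)
  obtain ⟨j, hj⟩ : ∃ j, Nat.find hS = j + 1 := ⟨Nat.find hS - 1, by omega⟩
  have hsj : A (H a j) = A (H a m₀) := hmin j (by omega) (by omega)
  have hstep : H a (Nat.find hS) = H a j ++ [a (j + 1)] := by rw [hj]; exact H_succ a j
  have hne : A (H a j ++ [a (j + 1)]) ≠ A (H a j) := by
    rw [← hstep, hsj]; exact hneN
  have hNk : Nat.find hS ≤ k := Nat.find_le ⟨hmk, hlt.ne⟩
  cases hab : a (j + 1) with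
  | false =>
    refine ⟨Nat.find hS, fun u => ?_⟩
    rw [hab] at hne
    have h2 := (hWC (H a j) u).2 hne
    rw [hstep, hab, ← hsj]
    exact h2
  | true =>
    exfalso
    rw [hab] at hne
    obtain ⟨u, hu⟩ := exists_suffix a (Nat.find hS) k hNk
    have h1 := (hWC (H a j) u).1 hne
    rw [hstep, hab] at hu
    rw [hu] at hlt
    rw [hsj] at h1
    exact absurd hlt (not_lt.mpr h1)

end Stmt15Aux

open Stmt15Aux in
theorem stmt_15 (γ : ℕ → ℝ)
    (hγpos : ∀ t, 1 ≤ t → 0 < γ t)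
    (hγsum : Summable (fun t : ℕ => γ (t + 1)))
    (A : List Bool → ℝ) (hWC : WeaklyConsistent A)
    (hp1 : A [] ∈ Set.Ioo (0 : ℝ) 1)
    (atil : ℕ → Bool) (t0 t1 : ℕ) (ht0 : 1 ≤ t0) (ht01 : t0 ≤ t1)
    (hdrop1 : price A atil (t1 + 1) < price A atil t0)
    (hdrop2 : price A atil t0 < A []) :
    ∃ v ∈ Set.Icc (0 : ℝ) 1, ∃ c > (0 : ℝ), ∃ T₀ : ℕ,
      ∀ T : ℕ, T₀ ≤ T → ∀ a : ℕ → Bool,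
        (∀ b : ℕ → Bool, Sur γ T A v b ≤ Sur γ T A v a) →
        Reg T A v a ≥ c * T := by
  obtain ⟨hP0, hP1⟩ := hp1
  rw [price_eq_H] at hdrop2
  -- `atil` is a down path
  have hdat : ∀ n, A (H atil n) ≤ A [] := by
    rcases dicho hWC atil with h | h
    · exfalso
      have := h (t0 - 1)
      linarith
    · exact h
  have hdrop1' : A (H atil t1) < A (H atil (t0 - 1)) := by
    rw [price_eq_H, price_eq_H] at hdrop1
    simpa using hdrop1
  obtain ⟨L, hcap⟩ := cap hWC atil (t0 - 1) t1 (by omega) hdrop1'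
  have hqP : A (H atil (t0 - 1)) < A [] := hdrop2
  set P : ℝ := A [] with hPdef
  set q : ℝ := A (H atil (t0 - 1)) with hqdef
  have hPq : 0 < P - q := by linarith
  set Γ : ℝ := ∑' i : ℕ, γ (i + 1) with hΓdef
  have hγnonneg : ∀ i : ℕ, 0 ≤ γ (i + 1) := fun i => (hγpos (i + 1) (by omega)).le
  have hΓpos : 0 < Γ :=
    lt_of_lt_of_le (hγpos 1 le_rfl) (hγsum.le_tsum 0 fun j _ => hγnonneg j)
  have hsum_le : ∀ T : ℕ, ∑ t ∈ Finset.Icc 1 T, γ t ≤ Γ := by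
    intro T
    have h1 : ∑ t ∈ Finset.Icc 1 T, γ t = ∑ i ∈ Finset.range T, γ (1 + i) := by
      rw [← Finset.Ico_add_one_right_eq_Icc, Finset.sum_Ico_eq_sum_range]
      norm_num
    rw [h1]
    refine le_trans (le_of_eq (Finset.sum_congr rfl fun i _ => by rw [Nat.add_comm])) ?_
    exact hγsum.sum_le_tsum _ (fun i _ => hγnonneg i)
  have hγL : 0 < γ (L + 1) := hγpos (L + 1) (by omega)
  set δ : ℝ := min ((1 - P) / 2) ((P - q) * γ (L + 1) / (2 * Γ)) with hδdef
  have hδpos : 0 < δ :=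
    lt_min (by linarith) (div_pos (mul_pos hPq hγL) (by linarith))
  have hδle1 : δ ≤ (1 - P) / 2 := min_le_left _ _
  have hδle2 : δ ≤ (P - q) * γ (L + 1) / (2 * Γ) := min_le_right _ _
  set v : ℝ := P + δ with hvdef
  have hv0 : 0 ≤ v := by linarith
  have hv1 : v ≤ 1 := by linarith
  have key : δ * Γ < γ (L + 1) * (v - q) := by
    have h2 : δ * Γ ≤ (P - q) * γ (L + 1) / 2 := by
      calc δ * Γ ≤ ((P - q) * γ (L + 1) / (2 * Γ)) * Γ :=
            mul_le_mul_of_nonneg_right hδle2 hΓpos.le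
        _ = (P - q) * γ (L + 1) / 2 := by field_simp
    nlinarith [mul_pos hPq hγL, mul_pos hδpos hγL]
  -- the reference strategy: travel to the cheap subtree, then accept forever
  set b : ℕ → Bool := fun t => if t ≤ L then atil t else true with hbdef
  have hbprefix : ∀ n, n ≤ L → H b n = H atil n := by
    intro n hn
    refine eq_on_prefix b atil L n hn fun t h1 h2 => ?_
    simp only [hbdef]
    rw [if_pos h2]
  have hbprice_le : ∀ t : ℕ, price A b t ≤ P := by
    intro t
    rw [price_eq_H]
    rcases Nat.lt_or_ge (t - 1) (L + 1) with h | h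
    · rw [hbprefix (t - 1) (by omega)]
      exact hdat _
    · obtain ⟨u, hu⟩ := exists_suffix b L (t - 1) (by omega)
      rw [hu, hbprefix L le_rfl]
      exact le_trans (hcap u) hqP.le
  have hbL1 : price A b (L + 1) ≤ q := by
    rw [price_eq_H]
    simp only [Nat.add_sub_cancel]
    rw [hbprefix L le_rfl]
    simpa using hcap []
  have hbL1t : b (L + 1) = true := by
    simp only [hbdef]
    rw [if_neg (by omega)]
  refine ⟨v, ⟨hv0, hv1⟩, δ, hδpos, L + 1, ?_⟩
  intro T hT a hopt
  have hterm_nonneg : ∀ t ∈ Finset.Icc 1 T,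
      0 ≤ γ t * (if b t then v - price A b t else 0) := by
    intro t ht
    have ht1 : 1 ≤ t := (Finset.mem_Icc.mp ht).1
    have hγt : 0 ≤ γ t := (hγpos t ht1).le
    by_cases hb : b t
    · rw [if_pos hb]
      have := hbprice_le t
      apply mul_nonneg hγt
      linarith
    · rw [if_neg hb]
      simp
  have hSb : γ (L + 1) * (v - q) ≤ Sur γ T A v b := by
    have hmem : L + 1 ∈ Finset.Icc 1 T := Finset.mem_Icc.mpr ⟨by omega, hT⟩
    have hsingle := Finset.single_le_sum hterm_nonneg hmem
    refine le_trans ?_ hsingle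
    rw [hbL1t, if_pos rfl]
    exact mul_le_mul_of_nonneg_left (by linarith [hbL1]) hγL.le
  have hSa : γ (L + 1) * (v - q) ≤ Sur γ T A v a := le_trans hSb (hopt b)
  rcases dicho hWC a with hup | hdown
  · exfalso
    have hbound : Sur γ T A v a ≤ δ * Γ := by
      have h1 : Sur γ T A v a ≤ ∑ t ∈ Finset.Icc 1 T, γ t * δ := by
        unfold Sur
        apply Finset.sum_le_sum
        intro t ht
        have ht1 : 1 ≤ t := (Finset.mem_Icc.mp ht).1
        have hγt : 0 ≤ γ t := (hγpos t ht1).le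
        by_cases hb : a t
        · rw [if_pos hb, price_eq_H]
          apply mul_le_mul_of_nonneg_left _ hγt
          have := hup (t - 1)
          linarith
        · rw [if_neg hb, mul_zero]
          exact mul_nonneg hγt hδpos.le
      have h2 : ∑ t ∈ Finset.Icc 1 T, γ t * δ = (∑ t ∈ Finset.Icc 1 T, γ t) * δ :=
        (Finset.sum_mul _ _ _).symm
      have h3 : (∑ t ∈ Finset.Icc 1 T, γ t) * δ ≤ Γ * δ :=
        mul_le_mul_of_nonneg_right (hsum_le T) hδpos.le
      calc Sur γ T A v a ≤ (∑ t ∈ Finset.Icc 1 T, γ t) * δ := h2 ▸ h1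
        _ ≤ Γ * δ := h3
        _ = δ * Γ := mul_comm _ _
    linarith
  · have hc : ∀ t ∈ Finset.Icc 1 T, δ ≤ v - (if a t then price A a t else 0) := by
      intro t _
      by_cases hb : a t
      · rw [if_pos hb, price_eq_H]
        have := hdown (t - 1)
        linarith
      · rw [if_neg hb]
        linarith
    have hsum := Finset.sum_le_sum hc
    rw [Finset.sum_const, Nat.card_Icc] at hsum
    simp only [Nat.add_sub_cancel, nsmul_eq_mul] at hsum
    unfold Reg
    calc δ * (T : ℝ) = (T : ℝ) * δ := mul_comm _ _
      _ ≤ _ := hsum
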